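/- Let D be a symmetric real n×n matrix and let δ ≥ 0 satisfy δ < |λ| for every nonzero eigenvalue λ of D. Suppose ζ : ℝ → ℝⁿ is differentiable with ζ'(θ) = D·ζ(θ) for all θ, and ∫_ℝ ‖ζ(θ)‖² · e^{-2δ|θ|} dθ < ∞. Then ζ is constant and D·ζ(θ) = 0 for all θ. -/

import Mathlib

open MeasureTheory Matrix

open scoped RealInnerProductSpace

/-- Helper: a nonnegative constant dominated by an integrable function on a set of
infinite measure must be zero. -/
lemma aux_const_eq_zero {h : ℝ → ℝ} (hh : Integrable h) {S : Set ℝ}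
    (hS : volume S = ⊤) (hSm : MeasurableSet S) {c : ℝ} (hc : 0 ≤ c)
    (hle : ∀ θ ∈ S, c ≤ h θ) : c = 0 := by
  have hconst : IntegrableOn (fun _ : ℝ => c) S := by
    refine Integrable.mono hh.integrableOn aestronglyMeasurable_const ?_
    refine (ae_restrict_iff' hSm).2 (Filter.Eventually.of_forall fun θ hθ => ?_)
    rw [Real.norm_of_nonneg hc, Real.norm_of_nonneg (hc.trans (hle θ hθ))]
    exact hle θ hθ
  rcases integrable_const_iff.1 hconst with h0 | hfin
  · exact h0
  · have hfin' := hfin.measure_univ_lt_top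
    rw [Measure.restrict_apply_univ, hS] at hfin'
    exact absurd hfin' (by simp)

/-- Helper: solutions of `f' = lam f` are exponentials. -/
lemma aux_ode_exp {f : ℝ → ℝ} {lam : ℝ} (hf : ∀ θ, HasDerivAt f (lam * f θ) θ) (θ : ℝ) :
    f θ = f 0 * Real.exp (lam * θ) := by
  have hg : ∀ t : ℝ, HasDerivAt (fun t => f t * Real.exp (-(lam * t))) 0 t := by
    intro t
    have he : HasDerivAt (fun t : ℝ => Real.exp (-(lam * t)))
        (-lam * Real.exp (-(lam * t))) t := by
      have h1 : HasDerivAt (fun t : ℝ => -(lam * t)) (-lam) t := by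
        simpa using (hasDerivAt_id t).const_mul (-lam)
      simpa [mul_comm, Function.comp_def] using (Real.hasDerivAt_exp (-(lam * t))).comp t h1
    have := (hf t).fun_mul he
    exact this.congr_deriv (by ring)
  have hconst : f θ * Real.exp (-(lam * θ)) = f 0 * Real.exp (-(lam * 0)) :=
    is_const_of_deriv_eq_zero (fun x => (hg x).differentiableAt)
      (fun x => (hg x).deriv) θ 0
  rw [mul_zero, neg_zero, Real.exp_zero, mul_one] at hconst
  have := congrArg (· * Real.exp (lam * θ)) hconst
  simpa [mul_assoc, ← Real.exp_add] using this

/-- A solution of `ζ' = D ζ` (D real symmetric) with weighted-`L²` growth below the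
spectral gap is constant and lies in the kernel of `D`. -/
theorem constant_of_subexponential_growth
    {n : ℕ} (D : Matrix (Fin n) (Fin n) ℝ) (hD : D.IsSymm) (δ : ℝ) (hδ0 : 0 ≤ δ)
    (hgap : ∀ lam : ℝ, lam ≠ 0 → Module.End.HasEigenvalue (Matrix.toLin' D) lam → δ < |lam|)
    (ζ : ℝ → EuclideanSpace ℝ (Fin n))
    (hderiv : ∀ θ : ℝ, HasDerivAt ζ (WithLp.toLp 2 (D.mulVec (ζ θ))) θ)
    (hint : Integrable (fun θ : ℝ => ‖ζ θ‖ ^ 2 * Real.exp (-2 * δ * |θ|))) :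
    (∀ θ θ' : ℝ, ζ θ = ζ θ') ∧ ∀ θ : ℝ, D.mulVec (ζ θ) = 0 := by
  set T : EuclideanSpace ℝ (Fin n) →ₗ[ℝ] EuclideanSpace ℝ (Fin n) :=
    Matrix.toEuclideanLin D with hTdef
  have hherm : D.IsHermitian := hD
  have hsymm : T.IsSymmetric := Matrix.isHermitian_iff_isSymmetric.mp hherm
  have hn : Module.finrank ℝ (EuclideanSpace ℝ (Fin n)) = n := finrank_euclideanSpace_fin
  set b := hsymm.eigenvectorBasis hn with hbdef
  set μ := hsymm.eigenvalues hn with hμdef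
  have hTb : ∀ i, T (b i) = μ i • b i := hsymm.apply_eigenvectorBasis hn
  have hTapp : ∀ x : EuclideanSpace ℝ (Fin n), T x = D.mulVec x := fun _ => rfl
  -- eigenvalues of `T` are eigenvalues of `toLin' D`
  have heig : ∀ i, Module.End.HasEigenvalue (Matrix.toLin' D) (μ i) := by
    intro i
    have h1 : Matrix.toLin' D (b i) = μ i • (b i : Fin n → ℝ) := by
      have := congrArg WithLp.ofLp (hTb i)
      rw [hTapp] at this
      exact this
    have h2 : (b i : Fin n → ℝ) ≠ 0 := by
        have := (hsymm.eigenvectorBasis hn).toBasis.ne_zero i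
        simpa using this
    exact Module.End.hasEigenvalue_of_hasEigenvector
      ⟨Module.End.mem_eigenspace_iff.mpr h1, h2⟩
  -- coefficient functions along eigenvectors with nonzero eigenvalue vanish
  have hzero : ∀ i, μ i ≠ 0 → ∀ θ : ℝ, ⟪b i, ζ θ⟫ = 0 := by
    intro i hμne
    set lam := μ i with hlam
    set f : ℝ → ℝ := fun θ => ⟪b i, ζ θ⟫ with hfdef
    have hfder : ∀ θ, HasDerivAt f (lam * f θ) θ := by
      intro θ
      have h1 := (hasDerivAt_const θ (b i)).inner ℝ (hderiv θ)
      have h2 : ⟪b i, WithLp.toLp 2 (D.mulVec (ζ θ))⟫ + ⟪(0 : EuclideanSpace ℝ (Fin n)), ζ θ⟫ = lam * f θ := by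
        rw [inner_zero_left, add_zero, ← hTapp, WithLp.toLp_ofLp, ← hsymm (b i) (ζ θ), hTb i,
          real_inner_smul_left]
      rwa [h2] at h1
    have hf_eq : ∀ θ, f θ = f 0 * Real.exp (lam * θ) := aux_ode_exp hfder
    have hbnorm : ‖b i‖ = 1 := b.orthonormal.1 i
    have hgap' : δ < |lam| := hgap lam hμne (heig i)
    -- the function `f 0 ^ 2 * exp (2 lam θ - 2 δ |θ|)` is integrable
    have hcont : Continuous fun θ : ℝ => f 0 ^ 2 * Real.exp (2 * lam * θ - 2 * δ * |θ|) := by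
      fun_prop
    have hIntg : Integrable fun θ : ℝ => f 0 ^ 2 * Real.exp (2 * lam * θ - 2 * δ * |θ|) := by
      refine hint.mono hcont.aestronglyMeasurable (Filter.Eventually.of_forall fun θ => ?_)
      have heq : f 0 ^ 2 * Real.exp (2 * lam * θ - 2 * δ * |θ|)
          = f θ ^ 2 * Real.exp (-2 * δ * |θ|) := by
        have h2 : Real.exp (2 * lam * θ - 2 * δ * |θ|)
            = Real.exp (lam * θ) ^ 2 * Real.exp (-2 * δ * |θ|) := by
          rw [pow_two, ← Real.exp_add, ← Real.exp_add]
          congr 1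
          ring
        rw [hf_eq θ, mul_pow, h2]
        ring
      have hle : f θ ^ 2 ≤ ‖ζ θ‖ ^ 2 := by
        have h1 : |f θ| ≤ ‖ζ θ‖ := by
          have := abs_real_inner_le_norm (b i) (ζ θ)
          rwa [hbnorm, one_mul] at this
        calc f θ ^ 2 = |f θ| ^ 2 := (sq_abs _).symm
          _ ≤ ‖ζ θ‖ ^ 2 := pow_le_pow_left₀ (abs_nonneg _) h1 2
      rw [Real.norm_of_nonneg (by positivity), Real.norm_of_nonneg (by positivity), heq]
      exact mul_le_mul_of_nonneg_right hle (Real.exp_pos _).le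
    -- on a suitable ray the integrand dominates the constant `f 0 ^ 2`
    have hf0 : f 0 ^ 2 = 0 := by
      rcases hμne.lt_or_gt with hneg | hpos
      · -- lam < 0 : use the ray `Iic 0`
        refine aux_const_eq_zero (S := Set.Iic (0:ℝ)) hIntg Real.volume_Iic measurableSet_Iic (sq_nonneg _)
          fun θ hθ => ?_
        have hθ0 : θ ≤ 0 := hθ
        have habs : |θ| = -θ := abs_of_nonpos hθ0
        have hlamδ : lam + δ < 0 := by
          have : δ < -lam := by rwa [abs_of_neg hneg] at hgap'
          linarith
        have hexp : (0 : ℝ) ≤ 2 * lam * θ - 2 * δ * |θ| := by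
          rw [habs]
          nlinarith
        calc f 0 ^ 2 = f 0 ^ 2 * 1 := (mul_one _).symm
          _ ≤ f 0 ^ 2 * Real.exp (2 * lam * θ - 2 * δ * |θ|) :=
            mul_le_mul_of_nonneg_left (Real.one_le_exp hexp) (sq_nonneg _)
      · -- lam > 0 : use the ray `Ici 0`
        refine aux_const_eq_zero (S := Set.Ici (0:ℝ)) hIntg Real.volume_Ici measurableSet_Ici (sq_nonneg _)
          fun θ hθ => ?_
        have hθ0 : (0 : ℝ) ≤ θ := hθ
        have habs : |θ| = θ := abs_of_nonneg hθ0
        have hδlam : δ < lam := by rwa [abs_of_pos hpos] at hgap'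
        have hexp : (0 : ℝ) ≤ 2 * lam * θ - 2 * δ * |θ| := by
          rw [habs]
          nlinarith
        calc f 0 ^ 2 = f 0 ^ 2 * 1 := (mul_one _).symm
          _ ≤ f 0 ^ 2 * Real.exp (2 * lam * θ - 2 * δ * |θ|) :=
            mul_le_mul_of_nonneg_left (Real.one_le_exp hexp) (sq_nonneg _)
    have hf00 : f 0 = 0 := by
      have := sq_eq_zero_iff.mp hf0
      exact this
    intro θ
    rw [show (⟪b i, ζ θ⟫ : ℝ) = f θ from rfl, hf_eq θ, hf00, zero_mul]
  -- therefore `D ζ = 0` everywhere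
  have hker : ∀ θ : ℝ, D.mulVec (ζ θ) = 0 := by
    intro θ
    have hrepr : b.repr (T (ζ θ)) = 0 := by
      ext i
      rw [OrthonormalBasis.repr_apply_apply]
      have : ⟪b i, T (ζ θ)⟫ = μ i * ⟪b i, ζ θ⟫ := by
        rw [← hsymm (b i) (ζ θ), hTb i, real_inner_smul_left]
      rw [this]
      by_cases h : μ i = 0
      · simp [h]
      · rw [hzero i h θ, mul_zero]
        simp
    have hT0 : T (ζ θ) = 0 := b.repr.map_eq_zero_iff.mp hrepr
    rw [← hTapp]
    exact congrArg WithLp.ofLp hT0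
  -- hence `ζ` is constant
  refine ⟨fun θ θ' => ?_, hker⟩
  have hζ0 : ∀ θ : ℝ, HasDerivAt ζ 0 θ := fun θ => by
    have := hderiv θ
    rwa [hker θ, WithLp.toLp_zero] at this
  exact is_const_of_deriv_eq_zero (fun x => (hζ0 x).differentiableAt)
    (fun x => (hζ0 x).deriv) θ θ'
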